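/- For every natural number n, the n-ary generalized C combinator satisfies C_n =βη (C (B B S_n) K_n). -/

import Mathlib

namespace LC

/-- Untyped λ-terms, de Bruijn indices. -/
inductive Tm : Type
  | var : ℕ → Tm
  | app : Tm → Tm → Tm
  | lam : Tm → Tm
  deriving DecidableEq

namespace Tm

/-- Shift the free variables ≥ c up by one. -/
def lift (c : ℕ) : Tm → Tm
  | var n => if n < c then var n else var (n + 1)
  | app a b => app (lift c a) (lift c b)
  | lam a => lam (lift (c + 1) a)

/-- Substitute `s` for the free variable `k`. -/
def subst (k : ℕ) (s : Tm) : Tm → Tm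
  | var n => if n = k then s else if k < n then var (n - 1) else var n
  | app a b => app (subst k s a) (subst k s b)
  | lam a => lam (subst (k + 1) (lift 0 s) a)

/-- One-step βη-reduction (with congruence closure). -/
inductive Step : Tm → Tm → Prop
  | beta (a b : Tm) : Step (app (lam a) b) (subst 0 b a)
  | eta (a : Tm) : Step (lam (app (lift 0 a) (var 0))) a
  | appL {a a' : Tm} (b : Tm) : Step a a' → Step (app a b) (app a' b)
  | appR (a : Tm) {b b' : Tm} : Step b b' → Step (app a b) (app a b')
  | lamCongr {a a' : Tm} : Step a a' → Step (lam a) (lam a')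

/-- βη-equivalence: the equivalence relation generated by βη-reduction. -/
def BetaEta : Tm → Tm → Prop := Relation.EqvGen Step

/-- Multi-step βη-reduction: reflexive-transitive closure of βη-reduction. -/
def Reduces : Tm → Tm → Prop := Relation.ReflTransGen Step

/-- I = λx.x -/
def I : Tm := lam (var 0)
/-- K = λxy.x -/
def K : Tm := lam (lam (var 1))
/-- B = λxyz.(x (y z)) -/
def B : Tm := lam (lam (lam (app (var 2) (app (var 1) (var 0)))))
/-- C = λxyz.(x z y) -/
def C : Tm := lam (lam (lam (app (app (var 2) (var 0)) (var 1))))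
/-- S = λxyz.(x z (y z)) -/
def S : Tm := lam (lam (lam (app (app (var 2) (var 0)) (app (var 1) (var 0)))))

/-- body of the n-th Church numeral: s (s ⋯ (s z)⋯), n times. -/
def churchBody : ℕ → Tm
  | 0 => var 0
  | n + 1 => app (var 1) (churchBody n)

/-- The n-th Church numeral c_n = λsz.(s (s ⋯ (s z)⋯)). -/
def church (n : ℕ) : Tm := lam (lam (churchBody n))

/-- n nested λ-abstractions. -/
def lamN : ℕ → Tm → Tm
  | 0, t => t
  | n + 1, t => lam (lamN n t)

/-- Shift all free variables up by n. -/
def liftN (n : ℕ) (t : Tm) : Tm := (lift 0)^[n] t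

/-- t (var (a+k-1)) ⋯ (var (a+1)) (var a) : left-associated application of t
to k variables with descending indices. -/
def appVars (t : Tm) (a k : ℕ) : Tm :=
  ((List.range k).reverse).foldl (fun s i => app s (var (a + i))) t

/-- t (var a) (var (a+1)) ⋯ (var (a+k-1)) : left-associated application of t
to k variables with ascending indices. -/
def appVarsAsc (t : Tm) (a k : ℕ) : Tm :=
  (List.range k).foldl (fun s i => app s (var (a + i))) t

/-- Left-associated application of t to a list of terms. -/
def appList (t : Tm) (l : List Tm) : Tm := l.foldl app t

/-- K_n = λp x_1…x_n. p -/
def Kn (n : ℕ) : Tm := lamN (n + 1) (var n)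
/-- S_n = λpq x_1…x_n.(p x_1⋯x_n (q x_1⋯x_n)) -/
def Sn (n : ℕ) : Tm :=
  lamN (n + 2) (app (appVars (var (n + 1)) 0 n) (appVars (var n) 0 n))
/-- B_n = λpq x_1…x_n.(p (q x_1⋯x_n)) -/
def Bn (n : ℕ) : Tm := lamN (n + 2) (app (var (n + 1)) (appVars (var n) 0 n))
/-- C_n = λpq x_1…x_n.(p x_1⋯x_n q) -/
def Cn (n : ℕ) : Tm := lamN (n + 2) (app (appVars (var (n + 1)) 0 n) (var n))


/-! ### Auxiliary lemmas -/

/-- All free variables are < c. -/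
def ClosedUnder : ℕ → Tm → Prop
  | c, var n => n < c
  | c, app a b => ClosedUnder c a ∧ ClosedUnder c b
  | c, lam a => ClosedUnder (c + 1) a

@[simp] theorem closedUnder_var {c n : ℕ} : ClosedUnder c (var n) ↔ n < c := Iff.rfl
@[simp] theorem closedUnder_app {c : ℕ} {a b : Tm} :
    ClosedUnder c (app a b) ↔ ClosedUnder c a ∧ ClosedUnder c b := Iff.rfl
@[simp] theorem closedUnder_lam {c : ℕ} {a : Tm} :
    ClosedUnder c (lam a) ↔ ClosedUnder (c + 1) a := Iff.rfl

theorem ClosedUnder.mono {t : Tm} : ∀ {c c' : ℕ}, c ≤ c' → ClosedUnder c t → ClosedUnder c' t := by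
  induction t with
  | var n => intro c c' h ht; simp_all; omega
  | app a b iha ihb => intro c c' h ht; exact ⟨iha h ht.1, ihb h ht.2⟩
  | lam a ih => intro c c' h ht; exact ih (Nat.succ_le_succ h) ht

theorem lift_closed {t : Tm} : ∀ {c c' : ℕ}, ClosedUnder c t → c ≤ c' → lift c' t = t := by
  induction t with
  | var n =>
      intro c c' h hcc
      simp only [closedUnder_var] at h
      simp only [lift, if_pos (by omega : n < c')]
  | app a b iha ihb =>
      intro c c' h hcc
      simp only [lift, iha h.1 hcc, ihb h.2 hcc]
  | lam a ih =>
      intro c c' h hcc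
      simp only [closedUnder_lam] at h
      simp only [lift, ih h (Nat.succ_le_succ hcc)]

theorem subst_closed {t : Tm} : ∀ {c k : ℕ} {s : Tm}, ClosedUnder c t → c ≤ k →
    subst k s t = t := by
  induction t with
  | var n =>
      intro c k s h hck
      simp only [closedUnder_var] at h
      simp only [subst, if_neg (by omega : ¬ n = k), if_neg (by omega : ¬ k < n)]
  | app a b iha ihb =>
      intro c k s h hck
      simp only [subst, iha h.1 hck, ihb h.2 hck]
  | lam a ih =>
      intro c k s h hck
      simp only [closedUnder_lam] at h
      simp only [subst, ih h (Nat.succ_le_succ hck)]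

theorem subst_var_eq {k : ℕ} (s : Tm) : subst k s (var k) = s := by simp [subst]

theorem subst_var_gt {n k : ℕ} (h : k < n) (s : Tm) : subst k s (var n) = var (n - 1) := by
  simp only [subst, if_neg (by omega : ¬ n = k), if_pos h]

theorem subst_var_lt {n k : ℕ} (h : n < k) (s : Tm) : subst k s (var n) = var n := by
  simp only [subst, if_neg (by omega : ¬ n = k), if_neg (by omega : ¬ k < n)]

theorem subst_lift : ∀ (t : Tm) (k : ℕ) (s : Tm), subst k s (lift k t) = t
  | var n, k, s => by
      by_cases h : n < k
      · simp only [lift, if_pos h, subst, if_neg (Nat.ne_of_lt h), if_neg (by omega : ¬ k < n)]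
      · simp only [lift, if_neg h, subst, if_neg (by omega : ¬ n + 1 = k),
          if_pos (by omega : k < n + 1), Nat.add_sub_cancel]
  | app a b, k, s => by simp only [lift, subst, subst_lift a, subst_lift b]
  | lam a, k, s => by simp only [lift, subst, subst_lift a]

theorem lift_lift : ∀ (t : Tm) {c c' : ℕ}, c ≤ c' →
    lift c (lift c' t) = lift (c' + 1) (lift c t)
  | var n, c, c', h => by
      by_cases h1 : n < c'
      · by_cases h2 : n < c
        · simp only [lift, if_pos h1, if_pos h2, if_pos (by omega : n < c' + 1)]
        · simp only [lift, if_pos h1, if_neg h2, if_pos (by omega : n + 1 < c' + 1),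
            if_neg h2]
      · have h2 : ¬ n < c := by omega
        simp only [lift, if_neg h1, if_neg h2, if_neg (by omega : ¬ n + 1 < c),
          if_neg (by omega : ¬ n + 1 < c' + 1)]
  | app a b, c, c', h => by simp only [lift, lift_lift a h, lift_lift b h]
  | lam a, c, c', h => by simp only [lift, lift_lift a (Nat.succ_le_succ h)]

theorem appVars_zero (t : Tm) (a : ℕ) : appVars t a 0 = t := rfl

theorem appVars_succ (t : Tm) (a k : ℕ) :
    appVars t a (k + 1) = appVars (app t (var (a + k))) a k := by
  simp [appVars, List.range_succ]

theorem lamN_succ (m : ℕ) (t : Tm) : lamN (m + 1) t = lam (lamN m t) := rfl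

theorem liftN_var (m j : ℕ) : liftN m (var j) = var (j + m) := by
  induction m with
  | zero => rfl
  | succ m ih =>
      simp only [liftN, Function.iterate_succ_apply'] at ih ⊢
      rw [ih]
      simp only [lift, if_neg (by omega : ¬ j + m < 0)]
      congr 1

theorem liftN_app (m : ℕ) (a b : Tm) : liftN m (app a b) = app (liftN m a) (liftN m b) := by
  induction m with
  | zero => rfl
  | succ m ih =>
      simp only [liftN, Function.iterate_succ_apply'] at ih ⊢
      rw [ih]; rfl

theorem liftN_closed {t : Tm} (h : ClosedUnder 0 t) (m : ℕ) : liftN m t = t := by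
  induction m with
  | zero => rfl
  | succ m ih =>
      simp only [liftN, Function.iterate_succ_apply'] at ih ⊢
      rw [ih, lift_closed h (Nat.zero_le _)]

theorem subst_lamN (k : ℕ) (s : Tm) (m : ℕ) (t : Tm) :
    subst k s (lamN m t) = lamN m (subst (k + m) (liftN m s) t) := by
  induction m generalizing k s with
  | zero => rfl
  | succ m ih =>
      simp only [lamN_succ, subst, ih]
      rw [show k + 1 + m = k + (m + 1) from by omega,
        show (liftN m (lift 0 s)) = liftN (m + 1) s from by
          simp [liftN, Function.iterate_succ_apply]]

theorem subst_appVars {a k j : ℕ} (h : a + k ≤ j) (s t : Tm) :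
    subst j s (appVars t a k) = appVars (subst j s t) a k := by
  induction k generalizing t with
  | zero => rfl
  | succ k ih =>
      rw [appVars_succ, appVars_succ, ih (by omega)]
      rw [show subst j s (app t (var (a + k)))
          = app (subst j s t) (subst j s (var (a + k))) from rfl,
        subst_var_lt (by omega : a + k < j)]

theorem closed_lamN {c m : ℕ} {t : Tm} (h : ClosedUnder (c + m) t) :
    ClosedUnder c (lamN m t) := by
  induction m generalizing c with
  | zero => exact h
  | succ m ih =>
      rw [lamN_succ, closedUnder_lam]
      exact ih (show ClosedUnder (c + 1 + m) t from by
        rw [show c + 1 + m = c + (m + 1) from by omega]; exact h)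

theorem closed_appVars {c a k : ℕ} {t : Tm} (ht : ClosedUnder c t) (h : a + k ≤ c) :
    ClosedUnder c (appVars t a k) := by
  induction k generalizing t with
  | zero => exact ht
  | succ k ih =>
      rw [appVars_succ]
      exact ih ⟨ht, show a + k < c from by omega⟩ (by omega)

/-! ### Reduction machinery -/

theorem Reduces.step {a b : Tm} (h : Step a b) : Reduces a b :=
  Relation.ReflTransGen.single h

theorem Reduces.refl' (a : Tm) : Reduces a a := Relation.ReflTransGen.refl

theorem Reduces.trans' {a b c : Tm} (h1 : Reduces a b) (h2 : Reduces b c) : Reduces a c :=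
  Relation.ReflTransGen.trans h1 h2

theorem Reduces.appL' {a a' : Tm} (b : Tm) (h : Reduces a a') :
    Reduces (app a b) (app a' b) :=
  Relation.ReflTransGen.lift (fun x => app x b) (fun _ _ hs => Step.appL b hs) _ _ h

theorem Reduces.appR' (a : Tm) {b b' : Tm} (h : Reduces b b') :
    Reduces (app a b) (app a b') :=
  Relation.ReflTransGen.lift (fun x => app a x) (fun _ _ hs => Step.appR a hs) _ _ h

theorem Reduces.lam' {a a' : Tm} (h : Reduces a a') : Reduces (lam a) (lam a') :=
  Relation.ReflTransGen.lift lam (fun _ _ hs => Step.lamCongr hs) _ _ h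

theorem Reduces.lamN' (m : ℕ) {a a' : Tm} (h : Reduces a a') :
    Reduces (lamN m a) (lamN m a') := by
  induction m with
  | zero => exact h
  | succ m ih => exact ih.lam'

theorem Reduces.appVars' (a k : ℕ) {t t' : Tm} (h : Reduces t t') :
    Reduces (appVars t a k) (appVars t' a k) := by
  induction k generalizing t t' with
  | zero => exact h
  | succ k ih => rw [appVars_succ, appVars_succ]; exact ih (h.appL' _)

theorem Reduces.betaEta {a b : Tm} (h : Reduces a b) : BetaEta a b := by
  induction h with
  | refl => exact Relation.EqvGen.refl a
  | tail _ hs ih => exact Relation.EqvGen.trans _ _ _ ih (Relation.EqvGen.rel _ _ hs)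

theorem BetaEta.symm' {a b : Tm} (h : BetaEta a b) : BetaEta b a := Relation.EqvGen.symm _ _ h

/-! ### Closedness of combinators -/

theorem closed_B : ClosedUnder 0 B := by
  simp [B, ClosedUnder]

theorem closed_C : ClosedUnder 0 C := by
  simp [C, ClosedUnder]

theorem closed_Kn (n : ℕ) : ClosedUnder 0 (Kn n) :=
  closed_lamN (by simp [ClosedUnder])

theorem closed_Sn (n : ℕ) : ClosedUnder 0 (Sn n) :=
  closed_lamN ⟨closed_appVars (by simp [ClosedUnder]) (by omega),
    closed_appVars (by simp [ClosedUnder]) (by omega)⟩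

/-! ### Key one-step combinator reductions -/

theorem red_C (a b : Tm) (ha : ClosedUnder 0 a) (hb : ClosedUnder 0 b) :
    Reduces (app (app C a) b) (lam (app (app a (var 0)) b)) := by
  have la : ∀ c, lift c a = a := fun c => lift_closed ha (Nat.zero_le _)
  have lb : ∀ c, lift c b = b := fun c => lift_closed hb (Nat.zero_le _)
  have sa : ∀ k s', subst k s' a = a := fun k s' => subst_closed ha (Nat.zero_le _)
  have s1 : Step (app C a) (lam (lam (app (app a (var 0)) (var 1)))) := by
    have h := Step.beta (lam (lam (app (app (var 2) (var 0)) (var 1)))) a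
    rwa [show subst 0 a (lam (lam (app (app (var 2) (var 0)) (var 1))))
        = lam (lam (app (app a (var 0)) (var 1))) from by
      simp [subst, la]] at h
  have s2 : Step (app (lam (lam (app (app a (var 0)) (var 1)))) b)
      (lam (app (app a (var 0)) b)) := by
    have h := Step.beta (lam (app (app a (var 0)) (var 1))) b
    rwa [show subst 0 b (lam (app (app a (var 0)) (var 1)))
        = lam (app (app a (var 0)) b) from by
      simp [subst, sa, lb]] at h
  exact ((Reduces.step s1).appL' b).trans' (Reduces.step s2)

theorem red_B (a b : Tm) :
    Reduces (app (app B a) b) (lam (app (lift 0 a) (app (lift 0 b) (var 0)))) := by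
  have s1 : Step (app B a)
      (lam (lam (app (lift 0 (lift 0 a)) (app (var 1) (var 0))))) := by
    have h := Step.beta (lam (lam (app (var 2) (app (var 1) (var 0))))) a
    rwa [show subst 0 a (lam (lam (app (var 2) (app (var 1) (var 0)))))
        = lam (lam (app (lift 0 (lift 0 a)) (app (var 1) (var 0)))) from by
      simp [subst]] at h
  have s2 : Step (app (lam (lam (app (lift 0 (lift 0 a)) (app (var 1) (var 0))))) b)
      (lam (app (lift 0 a) (app (lift 0 b) (var 0)))) := by
    have h := Step.beta (lam (app (lift 0 (lift 0 a)) (app (var 1) (var 0)))) b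
    rwa [show subst 0 b (lam (app (lift 0 (lift 0 a)) (app (var 1) (var 0))))
        = lam (app (lift 0 a) (app (lift 0 b) (var 0))) from by
      rw [lift_lift a (le_refl 0)]
      simp only [subst]
      rw [subst_lift]
      simp [subst]] at h
  exact ((Reduces.step s1).appL' b).trans' (Reduces.step s2)

/-! ### The n-dependent reductions -/

theorem red_Sn_var1 (n : ℕ) :
    Step (app (Sn n) (var 1))
      (lam (lamN n (app (appVars (var (n + 2)) 0 n) (appVars (var n) 0 n)))) := by
  have h := Step.beta (lam (lamN n (app (appVars (var (n + 1)) 0 n) (appVars (var n) 0 n))))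
    (var 1)
  rw [show Sn n = lam (lam (lamN n (app (appVars (var (n + 1)) 0 n)
      (appVars (var n) 0 n)))) from rfl]
  rwa [show subst 0 (var 1) (lam (lamN n (app (appVars (var (n + 1)) 0 n)
        (appVars (var n) 0 n))))
      = lam (lamN n (app (appVars (var (n + 2)) 0 n) (appVars (var n) 0 n))) from by
    rw [show subst 0 (var 1) (lam (lamN n (app (appVars (var (n + 1)) 0 n)
          (appVars (var n) 0 n))))
        = lam (subst 1 (var 2) (lamN n (app (appVars (var (n + 1)) 0 n)
          (appVars (var n) 0 n)))) from rfl]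
    rw [subst_lamN, liftN_var]
    rw [show subst (1 + n) (var (2 + n)) (app (appVars (var (n + 1)) 0 n)
          (appVars (var n) 0 n))
        = app (subst (1 + n) (var (2 + n)) (appVars (var (n + 1)) 0 n))
          (subst (1 + n) (var (2 + n)) (appVars (var n) 0 n)) from rfl]
    rw [subst_appVars (by omega), subst_appVars (by omega)]
    rw [show (1 : ℕ) + n = n + 1 from by omega, subst_var_eq,
      subst_var_lt (by omega : n < n + 1),
      show (2 : ℕ) + n = n + 2 from by omega]] at h

theorem red_Sn_Kn (n : ℕ) :
    Step (app (lam (lamN n (app (appVars (var (n + 2)) 0 n) (appVars (var n) 0 n))))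
        (app (Kn n) (var 0)))
      (lamN n (app (appVars (var (n + 1)) 0 n)
        (appVars (app (Kn n) (var n)) 0 n))) := by
  have h := Step.beta (lamN n (app (appVars (var (n + 2)) 0 n) (appVars (var n) 0 n)))
    (app (Kn n) (var 0))
  rwa [show subst 0 (app (Kn n) (var 0))
        (lamN n (app (appVars (var (n + 2)) 0 n) (appVars (var n) 0 n)))
      = lamN n (app (appVars (var (n + 1)) 0 n)
          (appVars (app (Kn n) (var n)) 0 n)) from by
    rw [subst_lamN, liftN_app, liftN_var, liftN_closed (closed_Kn n)]
    rw [show (0 : ℕ) + n = n from by omega]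
    congr 1
    rw [show subst n (app (Kn n) (var n)) (app (appVars (var (n + 2)) 0 n)
          (appVars (var n) 0 n))
        = app (subst n (app (Kn n) (var n)) (appVars (var (n + 2)) 0 n))
          (subst n (app (Kn n) (var n)) (appVars (var n) 0 n)) from rfl]
    rw [subst_appVars (by omega), subst_appVars (by omega)]
    rw [subst_var_gt (by omega : n < n + 2), subst_var_eq,
      show n + 2 - 1 = n + 1 from by omega]] at h

theorem red_Kn_body (n : ℕ) :
    Step (app (Kn n) (var n)) (lamN n (var (2 * n))) := by
  have h := Step.beta (lamN n (var n)) (var n)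
  rw [show Kn n = lam (lamN n (var n)) from rfl]
  rwa [show subst 0 (var n) (lamN n (var n)) = lamN n (var (2 * n)) from by
    rw [subst_lamN, liftN_var, show (0 : ℕ) + n = n from by omega, subst_var_eq,
      show n + n = 2 * n from by omega]] at h

theorem red_appVars_lamN (n : ℕ) : ∀ k : ℕ,
    Reduces (appVars (lamN k (var (n + k))) 0 k) (var n) := by
  intro k
  induction k with
  | zero => exact Reduces.refl' _
  | succ k ih =>
      rw [appVars_succ]
      refine Reduces.trans' (Reduces.appVars' 0 k (Reduces.step ?_)) ih
      rw [show lamN (k + 1) (var (n + (k + 1))) = lam (lamN k (var (n + (k + 1)))) from rfl]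
      have h := Step.beta (lamN k (var (n + (k + 1)))) (var (0 + k))
      rwa [show subst 0 (var (0 + k)) (lamN k (var (n + (k + 1))))
          = lamN k (var (n + k)) from by
        rw [subst_lamN, liftN_var, show (0 : ℕ) + k = k from by omega,
          subst_var_gt (by omega : k < n + (k + 1)),
          show n + (k + 1) - 1 = n + k from by omega]] at h


/-- C_n =βη (C (B B S_n) K_n). -/
theorem Cn_encoding (n : ℕ) :
    BetaEta (Cn n) (app (app C (app (app B B) (Sn n))) (Kn n)) := by
  apply BetaEta.symm'
  apply Reduces.betaEta
  have closedM : ClosedUnder 0 (app (app B B) (Sn n)) := ⟨⟨closed_B, closed_B⟩, closed_Sn n⟩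
  -- Step 1: C M Kn ⟶* λ. (M 0) Kn
  refine (red_C _ _ closedM (closed_Kn n)).trans' ?_
  -- Step 2: M 0 ⟶* B (Sn 0)
  have hM : Reduces (app (app (app B B) (Sn n)) (var 0)) (app B (app (Sn n) (var 0))) := by
    refine ((red_B B (Sn n)).appL' (var 0)).trans' ?_
    rw [lift_closed closed_B (Nat.zero_le _), lift_closed (closed_Sn n) (Nat.zero_le _)]
    have := Step.beta (app B (app (Sn n) (var 0))) (var 0)
    rw [show subst 0 (var 0) (app B (app (Sn n) (var 0)))
        = app B (app (Sn n) (var 0)) from by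
      rw [show subst 0 (var 0) (app B (app (Sn n) (var 0)))
          = app (subst 0 (var 0) B) (app (subst 0 (var 0) (Sn n))
            (subst 0 (var 0) (var 0))) from rfl]
      rw [subst_closed closed_B (le_refl 0), subst_closed (closed_Sn n) (le_refl 0)]
      simp [subst]] at this
    exact Reduces.step this
  refine (Reduces.lam' ((hM.appL' (Kn n)).trans' (red_B _ (Kn n)))).trans' ?_
  rw [lift_closed (closed_Kn n) (Nat.zero_le _),
    show lift 0 (app (Sn n) (var 0)) = app (Sn n) (var 1) from by
      rw [show lift 0 (app (Sn n) (var 0)) = app (lift 0 (Sn n)) (lift 0 (var 0)) from rfl,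
        lift_closed (closed_Sn n) (Nat.zero_le _)]
      simp [lift]]
  -- Now at λλ. (Sn 1) (Kn 0)
  refine (Reduces.lam' (Reduces.lam'
    (((Reduces.step (red_Sn_var1 n)).appL' _).trans'
      (Reduces.step (red_Sn_Kn n))))).trans' ?_
  -- Now at λλ. lamN n ((n+1) x⃗ (appVars (Kn n) 0 n ... ))
  have hinner : Reduces (appVars (app (Kn n) (var n)) 0 n) (var n) := by
    refine (Reduces.appVars' 0 n (Reduces.step (red_Kn_body n))).trans' ?_
    rw [show 2 * n = n + n from by omega]
    exact red_appVars_lamN n n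
  refine Reduces.trans' ?_ (Reduces.refl' (Cn n))
  rw [show Cn n = lam (lam (lamN n (app (appVars (var (n + 1)) 0 n) (var n)))) from rfl]
  exact Reduces.lam' (Reduces.lam' (Reduces.lamN' n (hinner.appR' _)))

end Tm
end LC
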